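/- Let R be a ring and I an ideal such that for every idempotent e ∈ R, every unit of the corner ring (e+I)(R/I)(e+I) lifts to a unit of eRe. Suppose a ∈ R is unit-regular (i.e., a = a w a for some unit w of R). Then every unit inner inverse of the image of a in R/I lifts to a unit inner inverse of a: if v̄ ∈ R/I is a unit with ā v̄ ā = ā, then there exists a unit u of R with a u a = a and u + I = v̄. -/
import Mathlib

private lemma aux_S {S : Type*} [Ring S] {E G H : S} (hEE : E * E = E)
    (hEGE : E * G * E = E) (hGH : G * H = 1) (hHG : H * G = 1) :
    (1-E) * (G - G*E*G) * (1-E) = G - G*E*G ∧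
    (1-E) * ((1-E)*H*(1-E)) * (1-E) = (1-E)*H*(1-E) ∧
    (G - G*E*G) * ((1-E)*H*(1-E)) = 1-E ∧
    ((1-E)*H*(1-E)) * (G - G*E*G) = 1-E := by
  have r1 : ∀ y : S, E*(E*y) = E*y := fun y => by rw [← mul_assoc, hEE]
  have r2 : ∀ y : S, E*(G*(E*y)) = E*y := fun y => by
    rw [← mul_assoc, ← mul_assoc, hEGE]
  have r2' : E*(G*E) = E := by rw [← mul_assoc, hEGE]
  have r3 : ∀ y : S, G*(H*y) = y := fun y => by rw [← mul_assoc, hGH, one_mul]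
  have r4 : ∀ y : S, H*(G*y) = y := fun y => by rw [← mul_assoc, hHG, one_mul]
  refine ⟨?_, ?_, ?_, ?_⟩ <;>
    · simp only [mul_sub, sub_mul, mul_add, add_mul, one_mul, mul_one, mul_assoc,
        hEE, r1, r2, r2', hGH, hHG, r3, r4]
      noncomm_ring

private lemma aux_key {S : Type*} [Ring S] {E G : S} (hEE : E * E = E)
    (hEGE : E * G * E = E) :
    (1 + (1-E)*G*E) * (E + E*G*(1-E) + (G - G*E*G)) = G := by
  have r1 : ∀ y : S, E*(E*y) = E*y := fun y => by rw [← mul_assoc, hEE]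
  have r2 : ∀ y : S, E*(G*(E*y)) = E*y := fun y => by
    rw [← mul_assoc, ← mul_assoc, hEGE]
  have r2' : E*(G*E) = E := by rw [← mul_assoc, hEGE]
  simp only [mul_sub, sub_mul, mul_add, add_mul, one_mul, mul_one, mul_assoc,
    hEE, r1, r2, r2']
  noncomm_ring

private lemma aux_R {R : Type*} [Ring R] {e x d d' : R} (hee : e * e = e)
    (hdc : (1-e) * d * (1-e) = d) (hd'c : (1-e) * d' * (1-e) = d')
    (hdd' : d * d' = 1-e) (hd'd : d' * d = 1-e) :
    (e + e*x*(1-e) + d) * (e - (e*x*(1-e))*d' + d') = 1 ∧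
    (e - (e*x*(1-e))*d' + d') * (e + e*x*(1-e) + d) = 1 ∧
    ((1-e)*x*e) * ((1-e)*x*e) = 0 ∧
    e * ((1 + (1-e)*x*e) * (e + e*x*(1-e) + d)) = e + e*x*(1-e) := by
  have h0 : e * (1-e) = 0 := by rw [mul_sub, mul_one, hee, sub_self]
  have h0' : (1-e) * e = 0 := by rw [sub_mul, one_mul, hee, sub_self]
  have hed : e * d = 0 := by
    rw [← hdc, ← mul_assoc, ← mul_assoc, h0, zero_mul, zero_mul]
  have hde : d * e = 0 := by rw [← hdc, mul_assoc, h0', mul_zero]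
  have hed' : e * d' = 0 := by
    rw [← hd'c, ← mul_assoc, ← mul_assoc, h0, zero_mul, zero_mul]
  have hd'e : d' * e = 0 := by rw [← hd'c, mul_assoc, h0', mul_zero]
  have r1 : ∀ y : R, e*(e*y) = e*y := fun y => by rw [← mul_assoc, hee]
  have red : ∀ y : R, e*(d*y) = 0 := fun y => by rw [← mul_assoc, hed, zero_mul]
  have rde : ∀ y : R, d*(e*y) = 0 := fun y => by rw [← mul_assoc, hde, zero_mul]
  have red' : ∀ y : R, e*(d'*y) = 0 := fun y => by rw [← mul_assoc, hed', zero_mul]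
  have rd'e : ∀ y : R, d'*(e*y) = 0 := fun y => by rw [← mul_assoc, hd'e, zero_mul]
  have rdd' : ∀ y : R, d*(d'*y) = y - e*y := fun y => by
    rw [← mul_assoc, hdd', sub_mul, one_mul]
  have rd'd : ∀ y : R, d'*(d*y) = y - e*y := fun y => by
    rw [← mul_assoc, hd'd, sub_mul, one_mul]
  refine ⟨?_, ?_, ?_, ?_⟩ <;>
    · simp only [mul_sub, sub_mul, mul_add, add_mul, one_mul, mul_one, mul_assoc,
        hee, r1, hed, hde, hed', hd'e, red, rde, red', rd'e, hdd', hd'd, rdd', rd'd,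
        mul_zero, zero_mul, sub_zero, zero_sub, add_zero, zero_add]
      noncomm_ring

/-- If units lift through corners modulo an ideal (encoded via a surjective
ring homomorphism `π : R → S` playing the role of the quotient map `R → R/I`), inner
inverses of regular elements lift, and `a` is unit-regular, then every unit inner inverse
of `π a` lifts to a unit inner inverse of `a`. -/
theorem stmt_4 {R S : Type*} [Ring R] [Ring S] (π : R →+* S)
    (hsurj : Function.Surjective π)
    (hcorner : ∀ e : R, IsIdempotentElem e → ∀ w : S, π e * w * π e = w →
      (∃ w' : S, π e * w' * π e = w' ∧ w * w' = π e ∧ w' * w = π e) →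
      ∃ v : R, e * v * e = v ∧ (∃ v' : R, e * v' * e = v' ∧ v * v' = e ∧ v' * v = e) ∧
        π v = w)
    (hinner : ∀ (b : R) (c : S), (∃ d : R, b * d * b = b) → π b * c * π b = π b →
      ∃ d : R, b * d * b = b ∧ π d = c)
    (a : R) (ha : ∃ u : Rˣ, a * u * a = a)
    (v : Sˣ) (hv : π a * v * π a = π a) :
    ∃ u : Rˣ, a * u * a = a ∧ π u = v := by
  obtain ⟨u, hu⟩ := ha
  obtain ⟨x₀, hx₀⟩ := hsurj (v : S)
  have hee : (a * (u:R)) * (a * (u:R)) = a * (u:R) := by rw [← mul_assoc, hu]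
  have hEE : π (a * (u:R)) * π (a * (u:R)) = π (a * (u:R)) := by rw [← map_mul, hee]
  have hGH : (π (u⁻¹:Rˣ) * (v:S)) * ((v⁻¹:Sˣ) * π (u:Rˣ)) = 1 := by
    rw [mul_assoc, ← mul_assoc (v:S), Units.mul_inv, one_mul, ← map_mul,
      Units.inv_mul, map_one]
  have hHG : ((v⁻¹:Sˣ) * π (u:Rˣ)) * (π (u⁻¹:Rˣ) * (v:S)) = 1 := by
    rw [mul_assoc, ← mul_assoc (π (u:Rˣ)), ← map_mul, Units.mul_inv, map_one,
      one_mul, Units.inv_mul]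
  have hEGE : π (a * (u:R)) * (π (u⁻¹:Rˣ) * (v:S)) * π (a * (u:R)) = π (a * (u:R)) := by
    have h1 : π (a * (u:R)) * (π (u⁻¹:Rˣ) * (v:S)) = π a * (v:S) := by
      rw [map_mul, mul_assoc, ← mul_assoc (π (u:Rˣ)), ← map_mul, Units.mul_inv,
        map_one, one_mul]
    rw [h1, map_mul, ← mul_assoc, hv]
  have hf : IsIdempotentElem (1 - a * (u:R)) := (IsIdempotentElem.one_sub hee)
  have hπf : π (1 - a * (u:R)) = 1 - π (a * (u:R)) := by rw [map_sub, map_one]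
  obtain ⟨s1, s2, s3, s4⟩ := aux_S hEE hEGE hGH hHG
  -- lift the Schur complement through the corner at 1 - a*u
  obtain ⟨d, hdc, ⟨d', hd'c, hdd', hd'd⟩, hπd⟩ :=
    hcorner (1 - a * (u:R)) hf
      ((π (u⁻¹:Rˣ) * (v:S)) - (π (u⁻¹:Rˣ) * (v:S)) * π (a * (u:R)) * (π (u⁻¹:Rˣ) * (v:S)))
      (by rw [hπf]; exact s1)
      ⟨π (1 - a * (u:R)) * ((v⁻¹:Sˣ) * π (u:Rˣ)) * π (1 - a * (u:R)),
        by rw [hπf]; exact s2, by rw [hπf]; exact s3, by rw [hπf]; exact s4⟩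
  obtain ⟨h21, h22, hcc, hgE⟩ :=
    aux_R (x := (u⁻¹:Rˣ) * x₀) hee hdc hd'c hdd' hd'd
  set e : R := a * (u:R) with he
  refine ⟨u * (⟨1 + (1-e)*((u⁻¹:Rˣ)*x₀)*e, 1 - (1-e)*((u⁻¹:Rˣ)*x₀)*e,
      by rw [add_mul, one_mul, mul_sub, mul_one, hcc, sub_zero]; abel,
      by rw [sub_mul, one_mul, mul_add, mul_one, hcc, add_zero]; abel⟩ *
    ⟨e + e*((u⁻¹:Rˣ)*x₀)*(1-e) + d, e - (e*((u⁻¹:Rˣ)*x₀)*(1-e))*d' + d', h21, h22⟩ :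
      Rˣ), ?_, ?_⟩
  · show a * ((u:R) * ((1 + (1-e)*((u⁻¹:Rˣ)*x₀)*e) * (e + e*((u⁻¹:Rˣ)*x₀)*(1-e) + d))) * a = a
    rw [← mul_assoc a (u:R), ← he, hgE, add_mul]
    have h1 : e * a = a := hu
    have h2 : e*((u⁻¹:Rˣ)*x₀)*(1-e) * a = 0 := by
      rw [mul_assoc, sub_mul, one_mul, h1, sub_self, mul_zero]
    rw [h1, h2, add_zero]
  · show π ((u:R) * ((1 + (1-e)*((u⁻¹:Rˣ)*x₀)*e) * (e + e*((u⁻¹:Rˣ)*x₀)*(1-e) + d))) = v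
    have hπx : π ((u⁻¹:Rˣ) * x₀) = π (u⁻¹:Rˣ) * (v:S) := by rw [map_mul, hx₀]
    have hkey := aux_key hEE hEGE
    have h1 : π ((1-e)*((u⁻¹:Rˣ)*x₀)*e) = (1 - π e) * (π (u⁻¹:Rˣ) * (v:S)) * π e := by
      rw [map_mul, map_mul, hπf, hπx]
    have h2 : π (e*((u⁻¹:Rˣ)*x₀)*(1-e)) = π e * (π (u⁻¹:Rˣ) * (v:S)) * (1 - π e) := by
      rw [map_mul, map_mul, hπf, hπx]
    calc π ((u:R) * ((1 + (1-e)*((u⁻¹:Rˣ)*x₀)*e) * (e + e*((u⁻¹:Rˣ)*x₀)*(1-e) + d)))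
        = π (u:Rˣ) * ((1 + π ((1-e)*((u⁻¹:Rˣ)*x₀)*e)) *
            (π e + π (e*((u⁻¹:Rˣ)*x₀)*(1-e)) + π d)) := by
          simp only [map_mul, map_add, map_one]
      _ = π (u:Rˣ) * (π (u⁻¹:Rˣ) * (v:S)) := by rw [h1, h2, hπd, hkey]
      _ = (v:S) := by rw [← mul_assoc, ← map_mul, Units.mul_inv, map_one, one_mul]
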